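/- Let f : ℝⁿ → [0,∞) be continuously differentiable, x ∈ ℝⁿ, and p ∈ ℝⁿ a descent direction of f at x, i.e. ⟪∇f(x), p⟫ < 0. Fix constants 0 < c₁ < c₂ < 1. Then there exists a nonempty open interval I ⊆ (0,∞) such that every α ∈ I satisfies the Wolfe conditions: f(x + αp) ≤ f(x) + c₁ α ⟪∇f(x), p⟫ and c₂ ⟪∇f(x), p⟫ ≤ ⟪∇f(x + αp), p⟫. -/

import Mathlib

open Set

theorem wolfe_interval_exists (n : ℕ) (f : EuclideanSpace ℝ (Fin n) → ℝ)
    (hf : ContDiff ℝ 1 f) (hf0 : ∀ y, 0 ≤ f y)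
    (x p : EuclideanSpace ℝ (Fin n))
    (hdesc : (inner ℝ (gradient f x) p : ℝ) < 0)
    (c₁ c₂ : ℝ) (hc₁ : 0 < c₁) (hc₁₂ : c₁ < c₂) (hc₂ : c₂ < 1) :
    ∃ a b : ℝ, 0 < a ∧ a < b ∧ ∀ α ∈ Set.Ioo a b,
      f (x + α • p) ≤ f x + c₁ * α * (inner ℝ (gradient f x) p : ℝ) ∧
      c₂ * (inner ℝ (gradient f x) p : ℝ) ≤ (inner ℝ (gradient f (x + α • p)) p : ℝ) := by
  set D : ℝ := (inner ℝ (gradient f x) p : ℝ) with hDdef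
  have hdiff : Differentiable ℝ f := hf.differentiable one_ne_zero
  set L : ℝ → EuclideanSpace ℝ (Fin n) := fun α => x + α • p with hL
  set ψ : ℝ → ℝ := fun α => (inner ℝ (gradient f (L α)) p : ℝ) with hψ
  -- inner product with gradient equals fderiv applied to p
  have hgradval : ∀ y, (inner ℝ (gradient f y) p : ℝ) = fderiv ℝ f y p := by
    intro y
    have h1 := (hdiff y).hasGradientAt
    have h2 := h1.hasFDerivAt
    have := h2.fderiv
    rw [this]
    simp [InnerProductSpace.toDual_apply_apply]
  -- derivative of L
  have hLderiv : ∀ α : ℝ, HasDerivAt L p α := by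
    intro α
    have := ((hasDerivAt_id α).smul_const p).const_add x
    simp only [one_smul] at this; exact this
  -- derivative of g := f ∘ L
  have hgderiv : ∀ α : ℝ, HasDerivAt (fun β => f (L β)) (ψ α) α := by
    intro α
    have := (hdiff (L α)).hasFDerivAt.comp_hasDerivAt α (hLderiv α)
    rw [show ψ α = fderiv ℝ f (L α) p from hgradval _]; exact this
  -- continuity of ψ
  have hψcont : Continuous ψ := by
    have h1 : Continuous (fderiv ℝ f) := hf.continuous_fderiv one_ne_zero
    have h2 : Continuous L := by
      apply Continuous.add continuous_const
      exact continuous_id.smul continuous_const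
    have : Continuous fun α => fderiv ℝ f (L α) p :=
      (h1.comp h2).clm_apply continuous_const
    simpa [hψ, hgradval] using this
  have hψ0 : ψ 0 = D := by simp [hψ, hL, hDdef]
  -- h
  set h : ℝ → ℝ := fun α => f (L α) - (f x + c₁ * α * D) with hh
  have hLcont : Continuous L := by
    apply Continuous.add continuous_const
    exact continuous_id.smul continuous_const
  have hhderiv : ∀ α : ℝ, HasDerivAt h (ψ α - c₁ * D) α := by
    intro α
    have hlin : HasDerivAt (fun β : ℝ => f x + c₁ * β * D) (c₁ * D) α := by
      have := (((hasDerivAt_id α).const_mul c₁).mul_const D).const_add (f x)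
      simpa using this
    exact (hgderiv α).sub hlin
  have hhcont : Continuous h := by
    apply Continuous.sub (hf.continuous.comp hLcont)
    continuity
  have hh0 : h 0 = 0 := by simp [hh, hL]
  -- small s with h s < 0
  have hd0 : HasDerivAt h ((1 - c₁) * D) 0 := by
    have := hhderiv 0
    rw [hψ0] at this
    convert this using 1; ring
  have hder_neg : (1 - c₁) * D < 0 := by
    have h1 : 0 < 1 - c₁ := by nlinarith
    exact mul_neg_of_pos_of_neg h1 hdesc
  obtain ⟨s, hs0, hhs⟩ : ∃ s : ℝ, 0 < s ∧ h s < 0 := by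
    have hslope : Filter.Tendsto (slope h 0) (nhdsWithin 0 {(0:ℝ)}ᶜ) (nhds ((1 - c₁) * D)) :=
      hasDerivAt_iff_tendsto_slope.mp hd0
    have hev : ∀ᶠ α in nhdsWithin 0 {(0:ℝ)}ᶜ, slope h 0 α < 0 :=
      hslope.eventually_lt_const hder_neg
    have hev2 : ∀ᶠ α in nhdsWithin (0:ℝ) (Set.Ioi 0), slope h 0 α < 0 :=
      hev.filter_mono (nhdsWithin_mono _ (fun a ha => ne_of_gt ha))
    obtain ⟨s, hs, hsmem⟩ := (hev2.and eventually_mem_nhdsWithin).exists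
    refine ⟨s, hsmem, ?_⟩
    have : slope h 0 s = h s / s := by simp [slope, hh0, div_eq_inv_mul]
    rw [this] at hs
    exact (div_neg_iff.mp hs).resolve_left (fun ⟨_, h2⟩ => absurd hsmem (not_lt.mpr h2.le)) |>.1
  -- big T with h T > 0
  set T : ℝ := max (s + 1) ((f x + 1) / (c₁ * (-D))) with hT
  have hcD : 0 < c₁ * (-D) := mul_pos hc₁ (neg_pos.mpr hdesc)
  have hsT : s < T := lt_of_lt_of_le (by linarith) (le_max_left _ _)
  have hhT : 0 < h T := by
    have h1 : (f x + 1) / (c₁ * (-D)) ≤ T := le_max_right _ _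
    have h2 : f x + 1 ≤ T * (c₁ * (-D)) := by
      rw [div_le_iff₀ hcD] at h1; linarith
    have h3 : 0 ≤ f (L T) := hf0 _
    simp only [hh]
    nlinarith
  -- first zero of h after s
  set Z : Set ℝ := {α ∈ Set.Icc s T | h α = 0} with hZ
  have hZne : Z.Nonempty := by
    obtain ⟨t, htm, ht0⟩ := intermediate_value_Icc hsT.le (hhcont.continuousOn)
      (⟨hhs.le, hhT.le⟩ : (0:ℝ) ∈ Set.Icc (h s) (h T))
    exact ⟨t, htm, ht0⟩
  have hZclosed : IsClosed Z := by
    have : Z = Set.Icc s T ∩ h ⁻¹' {0} := by ext a; exact Iff.rfl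
    rw [this]
    exact isClosed_Icc.inter (isClosed_singleton.preimage hhcont)
  have hZbdd : BddBelow Z := ⟨s, fun a ha => ha.1.1⟩
  set t₀ : ℝ := sInf Z with ht₀
  have ht₀mem : t₀ ∈ Z := hZclosed.csInf_mem hZne hZbdd
  have ht₀0 : h t₀ = 0 := ht₀mem.2
  have hst₀ : s < t₀ := by
    rcases lt_or_eq_of_le ht₀mem.1.1 with h1 | h1
    · exact h1
    · exfalso; rw [← h1] at ht₀0; linarith
  -- h < 0 on Ico s t₀
  have hneg : ∀ α ∈ Set.Ico s t₀, h α < 0 := by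
    intro α ⟨hα1, hα2⟩
    by_contra hcon
    push_neg at hcon
    obtain ⟨z, hzm, hz0⟩ := intermediate_value_Icc hα1 hhcont.continuousOn
      (⟨hhs.le, hcon⟩ : (0:ℝ) ∈ Set.Icc (h s) (h α))
    have hz : z ∈ Z := ⟨⟨hzm.1, le_trans hzm.2 (le_trans hα2.le ht₀mem.1.2)⟩, hz0⟩
    have := csInf_le hZbdd hz
    linarith [hzm.2]
  -- MVT on [s, t₀]
  obtain ⟨c, hcmem, hcval⟩ := exists_hasDerivAt_eq_slope h (fun α => ψ α - c₁ * D) hst₀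
    hhcont.continuousOn (fun α _ => hhderiv α)
  have hcpos : 0 < c := lt_trans hs0 hcmem.1
  have hslopepos : (h t₀ - h s) / (t₀ - s) > 0 := by
    apply div_pos (by linarith) (by linarith)
  have hψc : c₂ * D < ψ c := by
    rw [← hcval] at hslopepos
    nlinarith [mul_lt_mul_of_neg_right hc₁₂ hdesc]
  have hhc : h c < 0 := hneg c ⟨hcmem.1.le, hcmem.2⟩
  -- open interval around c
  set V : Set ℝ := {α | h α < 0} ∩ {α | c₂ * D < ψ α} with hV
  have hVopen : IsOpen V := ((isOpen_lt hhcont continuous_const).inter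
    (isOpen_lt continuous_const hψcont))
  have hcV : c ∈ V := ⟨hhc, hψc⟩
  obtain ⟨δ, hδ0, hball⟩ := Metric.isOpen_iff.mp hVopen c hcV
  refine ⟨max (c - δ) (c / 2), c + δ, by positivity, ?_, ?_⟩
  · exact max_lt (by linarith) (by linarith)
  · intro α ⟨hα1, hα2⟩
    have hαV : α ∈ V := by
      apply hball
      rw [Real.ball_eq_Ioo]
      exact ⟨lt_of_le_of_lt (le_max_left _ _) hα1, hα2⟩
    refine ⟨?_, le_of_lt hαV.2⟩
    have := hαV.1
    simp only [hh, hL, Set.mem_setOf_eq] at this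
    linarith
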